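/- arXiv:1603.01744 — 3 statements merged into one kernel-verified Lean document; each statement's English description precedes it below -/
import Mathlib

section
/- Let M ≥ 2, let A = (A_1,…,A_M) be an irreducible tuple of d_1×d_1 real matrices and B = (B_1,…,B_M) an irreducible tuple of d_2×d_2 real matrices, let s, t > 0, and suppose P(A,s) > −∞ and P(B,t) > −∞. If there is a constant C > 0 such that C^{−1} e^{−nP(A,s)} ‖A_{i_n}⋯A_{i_1}‖^s ≤ e^{−nP(B,t)} ‖B_{i_n}⋯B_{i_1}‖^t ≤ C e^{−nP(A,s)} ‖A_{i_n}⋯A_{i_1}‖^s for every n ≥ 1 and all i_1,…,i_n ∈ {1,…,M}, then e^{−nP(A,s)} ρ(A_{i_n}⋯A_{i_1})^s = e^{−nP(B,t)} ρ(B_{i_n}⋯B_{i_1})^t for every n ≥ 1 and all i_1,…,i_n ∈ {1,…,M}. -/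
open MeasureTheory Filter Topology

/-- The operator norm on square real matrices induced by the Euclidean norm. -/
noncomputable def opNorm {n : Type*} [Fintype n] [DecidableEq n]
    (X : Matrix n n ℝ) : ℝ :=
  ‖Matrix.toEuclideanCLM (𝕜 := ℝ) X‖

/-- The spectral radius `ρ(X) = inf_{k ≥ 1} ‖X^k‖^(1/k)` (Gelfand). -/
noncomputable def specRad {n : Type*} [Fintype n] [DecidableEq n]
    (X : Matrix n n ℝ) : ℝ :=
  ⨅ k : ℕ, opNorm (X ^ (k + 1)) ^ ((1 : ℝ) / (k + 1))

/-- The product `A_{x_n} ⋯ A_{x_1}` associated to the word `x = (x_1, …, x_n)`. -/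
noncomputable def wordProd {M d n : ℕ} (A : Fin M → Matrix (Fin d) (Fin d) ℝ)
    (x : Fin n → Fin M) : Matrix (Fin d) (Fin d) ℝ :=
  (List.ofFn (fun i => A (x i))).reverse.prod

/-- The product `A_{x_n} ⋯ A_{x_1}` associated to the word `w = [x_1, …, x_n]`. -/
noncomputable def listProd {M d : ℕ} (A : Fin M → Matrix (Fin d) (Fin d) ℝ)
    (w : List (Fin M)) : Matrix (Fin d) (Fin d) ℝ :=
  ((w.map A).reverse).prod

/-- Irreducibility: no invariant subspace `U` with `0 < dim U < d`. -/
def IsIrredTuple {M d : ℕ} (A : Fin M → Matrix (Fin d) (Fin d) ℝ) : Prop :=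
  ¬ ∃ U : Submodule ℝ (Fin d → ℝ),
      (∀ i, U.map (A i).mulVecLin ≤ U) ∧ U ≠ ⊥ ∧ U ≠ ⊤

/-- The shift map on `Σ_M = {1,…,M}^ℕ`. -/
def shift {M : ℕ} : (ℕ → Fin M) → (ℕ → Fin M) := fun x n => x (n + 1)

/-- The cylinder set `[x_1 ⋯ x_n]` determined by the word `w = [x_1, …, x_n]`. -/
def cyl {M : ℕ} (w : List (Fin M)) : Set (ℕ → Fin M) :=
  {y | ∀ i : Fin w.length, y (i : ℕ) = w.get i}

/-- The Gibbs inequality for `(A, s)` with constants `C > 0`, `P ∈ ℝ`. -/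
def IsGibbs {M d : ℕ} (A : Fin M → Matrix (Fin d) (Fin d) ℝ) (s C P : ℝ)
    (μ : Measure (ℕ → Fin M)) : Prop :=
  ∀ w : List (Fin M), w ≠ [] →
    C⁻¹ * (μ (cyl w)).toReal ≤ Real.exp (-(w.length : ℝ) * P) * opNorm (listProd A w) ^ s ∧
    Real.exp (-(w.length : ℝ) * P) * opNorm (listProd A w) ^ s ≤ C * (μ (cyl w)).toReal

/-- The pressure `P(A,s) = inf_{n ≥ 1} (1/n) log Σ_{|x| = n} ‖A_{x_n} ⋯ A_{x_1}‖^s ∈ [-∞, ∞)`,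
with the convention that a term is `-∞` when the corresponding sum vanishes. -/
noncomputable def pressure {M d : ℕ} (A : Fin M → Matrix (Fin d) (Fin d) ℝ) (s : ℝ) : EReal :=
  ⨅ n : ℕ,
    if (∑ x : Fin (n + 1) → Fin M, opNorm (wordProd A x) ^ s) = 0 then (⊥ : EReal)
    else ((Real.log (∑ x : Fin (n + 1) → Fin M, opNorm (wordProd A x) ^ s) / (n + 1) : ℝ) : EReal)


lemma opNorm_nonneg'' {n : Type*} [Fintype n] [DecidableEq n] (X : Matrix n n ℝ) :
    0 ≤ opNorm X := norm_nonneg _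

lemma opNorm_pow_le'' {n : Type*} [Fintype n] [DecidableEq n] (X : Matrix n n ℝ)
    {k : ℕ} (hk : 0 < k) : opNorm (X ^ k) ≤ opNorm X ^ k := by
  unfold opNorm; rw [map_pow]; exact norm_pow_le' _ hk

lemma specRad_nonneg'' {n : Type*} [Fintype n] [DecidableEq n] (X : Matrix n n ℝ) :
    0 ≤ specRad X :=
  le_ciInf fun _ => Real.rpow_nonneg (norm_nonneg _) _

lemma specRad_le'' {n : Type*} [Fintype n] [DecidableEq n] (X : Matrix n n ℝ)
    {k : ℕ} (hk : 0 < k) : specRad X ≤ opNorm (X ^ k) ^ ((1:ℝ)/k) := by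
  obtain ⟨i, rfl⟩ : ∃ i, k = i + 1 := ⟨k - 1, by omega⟩
  have hbdd : BddBelow (Set.range fun j : ℕ => opNorm (X ^ (j + 1)) ^ ((1:ℝ)/(j+1))) := by
    refine ⟨0, ?_⟩
    rintro r ⟨j, rfl⟩
    exact Real.rpow_nonneg (norm_nonneg _) _
  refine (ciInf_le hbdd i).trans_eq ?_
  congr 1
  push_cast
  ring

lemma exp_mul_rpow_eq (c a s : ℝ) (hc : 0 ≤ c) {k : ℕ} (hk : 0 < k) :
    (Real.exp (-(k:ℝ)*a) * c ^ s) ^ ((1:ℝ)/k)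
      = Real.exp (-a) * (c ^ ((1:ℝ)/k)) ^ s := by
  have hk' : (k:ℝ) ≠ 0 := Nat.cast_ne_zero.2 hk.ne'
  rw [Real.mul_rpow (Real.exp_pos _).le (Real.rpow_nonneg hc _),
      Real.rpow_def_of_pos (Real.exp_pos _), Real.log_exp,
      ← Real.rpow_mul hc, ← Real.rpow_mul hc]
  congr 1
  · congr 1; field_simp
  · congr 1; ring

lemma half_le {d₁ d₂ : ℕ} (X : Matrix (Fin d₁) (Fin d₁) ℝ) (Y : Matrix (Fin d₂) (Fin d₂) ℝ)
    (s t a b C : ℝ) (hs : 0 < s) (ht : 0 < t) (hC : 0 < C)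
    (h : ∀ k : ℕ, 0 < k →
      Real.exp (-(k : ℝ) * a) * opNorm (X ^ k) ^ s ≤
        C * (Real.exp (-(k : ℝ) * b) * opNorm (Y ^ k) ^ t)) :
    Real.exp (-a) * specRad X ^ s ≤ Real.exp (-b) * specRad Y ^ t := by
  set L := Real.exp (-a) * specRad X ^ s with hLdef
  have hL0 : 0 ≤ L := mul_nonneg (Real.exp_pos _).le (Real.rpow_nonneg (specRad_nonneg'' X) _)
  have claim1 : ∀ m : ℕ, 0 < m →
      L ≤ Real.exp (-b) * (opNorm (Y ^ m) ^ ((1:ℝ)/m)) ^ t := by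
    intro m hm
    set D := Real.exp (-b) * (opNorm (Y ^ m) ^ ((1:ℝ)/m)) ^ t with hDdef
    have tend : Tendsto (fun j : ℕ => C ^ ((1:ℝ)/(m*(j+1))) * D) atTop (𝓝 (1 * D)) := by
      apply Tendsto.mul_const
      have h1 : Tendsto (fun j : ℕ => Real.log C * ((1:ℝ)/(m*(j+1)))) atTop (𝓝 (Real.log C * 0)) := by
        apply Tendsto.const_mul
        simp only [one_div]
        apply Tendsto.comp tendsto_inv_atTop_zero
        apply tendsto_atTop_mono (fun j => ?_) tendsto_natCast_atTop_atTop
        · show (j : ℝ) ≤ (m:ℝ) * ((j:ℝ)+1)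
          have hm1 : (1:ℝ) ≤ (m:ℝ) := by exact_mod_cast hm
          nlinarith [Nat.cast_nonneg (α := ℝ) j]
      have h2 := (Real.continuous_exp.tendsto _).comp h1
      simp only [mul_zero, Real.exp_zero] at h2
      convert h2 using 2 with j
      rw [Real.rpow_def_of_pos hC]
      simp [one_div, Function.comp]
    have bound : ∀ j : ℕ, L ≤ C ^ ((1:ℝ)/(m*(j+1))) * D := by
      intro j
      set k := m * (j+1) with hkdef
      have hk : 0 < k := Nat.mul_pos hm (Nat.succ_pos j)
      have hk' : ((k:ℕ):ℝ) ≠ 0 := Nat.cast_ne_zero.2 hk.ne'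
      have e1 : specRad X ≤ opNorm (X ^ k) ^ ((1:ℝ)/k) := specRad_le'' X hk
      have step1 : L ≤ Real.exp (-a) * (opNorm (X ^ k) ^ ((1:ℝ)/k)) ^ s := by
        rw [hLdef]
        exact mul_le_mul_of_nonneg_left
          (Real.rpow_le_rpow (specRad_nonneg'' X) e1 hs.le) (Real.exp_pos _).le
      have step2 : Real.exp (-a) * (opNorm (X ^ k) ^ ((1:ℝ)/k)) ^ s
          ≤ (C * (Real.exp (-(k:ℝ)*b) * opNorm (Y ^ k) ^ t)) ^ ((1:ℝ)/k) := by
        rw [← exp_mul_rpow_eq _ _ _ (opNorm_nonneg'' _) hk]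
        exact Real.rpow_le_rpow
          (mul_nonneg (Real.exp_pos _).le (Real.rpow_nonneg (opNorm_nonneg'' _) _))
          (h k hk) (by positivity)
      have step3 : (C * (Real.exp (-(k:ℝ)*b) * opNorm (Y ^ k) ^ t)) ^ ((1:ℝ)/k)
          = C ^ ((1:ℝ)/k) * (Real.exp (-b) * (opNorm (Y ^ k) ^ ((1:ℝ)/k)) ^ t) := by
        rw [Real.mul_rpow hC.le
          (mul_nonneg (Real.exp_pos _).le (Real.rpow_nonneg (opNorm_nonneg'' _) _)),
          exp_mul_rpow_eq _ _ _ (opNorm_nonneg'' _) hk]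
      have step4 : opNorm (Y ^ k) ^ ((1:ℝ)/k) ≤ opNorm (Y ^ m) ^ ((1:ℝ)/m) := by
        have hle : opNorm (Y ^ k) ≤ opNorm (Y ^ m) ^ (j+1) := by
          rw [hkdef, pow_mul]
          exact opNorm_pow_le'' _ (Nat.succ_pos j)
        calc opNorm (Y ^ k) ^ ((1:ℝ)/k)
            ≤ (opNorm (Y ^ m) ^ (j+1)) ^ ((1:ℝ)/k) :=
              Real.rpow_le_rpow (opNorm_nonneg'' _) hle (by positivity)
          _ = opNorm (Y ^ m) ^ (((j:ℝ)+1) * ((1:ℝ)/k)) := by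
              rw [← Real.rpow_natCast (opNorm (Y ^ m)) (j+1),
                ← Real.rpow_mul (opNorm_nonneg'' _)]
              push_cast; ring_nf
          _ = opNorm (Y ^ m) ^ ((1:ℝ)/m) := by
              congr 1
              have hm' : (m:ℝ) ≠ 0 := Nat.cast_ne_zero.2 hm.ne'
              have hj' : (j:ℝ)+1 ≠ 0 := by positivity
              rw [hkdef]; push_cast; field_simp
      calc L ≤ Real.exp (-a) * (opNorm (X ^ k) ^ ((1:ℝ)/k)) ^ s := step1
        _ ≤ (C * (Real.exp (-(k:ℝ)*b) * opNorm (Y ^ k) ^ t)) ^ ((1:ℝ)/k) := step2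
        _ = C ^ ((1:ℝ)/k) * (Real.exp (-b) * (opNorm (Y ^ k) ^ ((1:ℝ)/k)) ^ t) := step3
        _ ≤ C ^ ((1:ℝ)/k) * (Real.exp (-b) * (opNorm (Y ^ m) ^ ((1:ℝ)/m)) ^ t) := by
            apply mul_le_mul_of_nonneg_left _ (Real.rpow_nonneg hC.le _)
            exact mul_le_mul_of_nonneg_left
              (Real.rpow_le_rpow (Real.rpow_nonneg (opNorm_nonneg'' _) _) step4 ht.le)
              (Real.exp_pos _).le
        _ = C ^ ((1:ℝ)/(m*(j+1))) * D := by rw [hkdef, hDdef]; push_cast; ring_nf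
    have := ge_of_tendsto' tend bound
    rwa [one_mul] at this
  have key : (L / Real.exp (-b)) ^ t⁻¹ ≤ specRad Y := by
    apply le_ciInf
    intro i
    have h1 := claim1 (i+1) (Nat.succ_pos i)
    have hQ0 : 0 ≤ opNorm (Y ^ (i+1)) ^ ((1:ℝ)/((i+1:ℕ):ℝ)) :=
      Real.rpow_nonneg (opNorm_nonneg'' _) _
    have h2 : L / Real.exp (-b) ≤ (opNorm (Y ^ (i+1)) ^ ((1:ℝ)/((i+1:ℕ):ℝ))) ^ t := by
      rw [div_le_iff₀ (Real.exp_pos _), mul_comm]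
      exact h1
    have h3 : (L / Real.exp (-b)) ^ t⁻¹
        ≤ ((opNorm (Y ^ (i+1)) ^ ((1:ℝ)/((i+1:ℕ):ℝ))) ^ t) ^ t⁻¹ :=
      Real.rpow_le_rpow (div_nonneg hL0 (Real.exp_pos _).le) h2 (by positivity)
    rw [Real.rpow_rpow_inv hQ0 ht.ne'] at h3
    convert h3 using 3
    · rfl
    push_cast
    ring
  have h4 : L / Real.exp (-b) ≤ specRad Y ^ t := by
    have := Real.rpow_le_rpow (Real.rpow_nonneg (div_nonneg hL0 (Real.exp_pos _).le) _) key ht.le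
    rwa [Real.rpow_inv_rpow (div_nonneg hL0 (Real.exp_pos _).le) ht.ne'] at this
  rw [div_le_iff₀ (Real.exp_pos _)] at h4
  rw [mul_comm] at h4
  exact h4

lemma listProd_append' {M d : ℕ} (A : Fin M → Matrix (Fin d) (Fin d) ℝ) (w v : List (Fin M)) :
    listProd A (w ++ v) = listProd A v * listProd A w := by
  simp [listProd, List.map_append, List.reverse_append]

lemma listProd_ofFn' {M d n : ℕ} (A : Fin M → Matrix (Fin d) (Fin d) ℝ) (x : Fin n → Fin M) :
    listProd A (List.ofFn x) = wordProd A x := by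
  unfold listProd wordProd
  rw [List.map_ofFn]
  rfl

lemma wordProd_get' {M d : ℕ} (A : Fin M → Matrix (Fin d) (Fin d) ℝ) (w : List (Fin M)) :
    wordProd A w.get = listProd A w := by
  rw [← listProd_ofFn' A w.get, List.ofFn_get]

/-- norm-equivalence of normalised potentials implies equality of normalised
spectral radii (Theorem 4.1, (ii) ⟹ (iii)). -/
theorem stmt_10 {M d₁ d₂ : ℕ} (hM : 2 ≤ M)
    (A : Fin M → Matrix (Fin d₁) (Fin d₁) ℝ) (B : Fin M → Matrix (Fin d₂) (Fin d₂) ℝ)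
    (hA : IsIrredTuple A) (hB : IsIrredTuple B)
    (s t : ℝ) (hs : 0 < s) (ht : 0 < t)
    (hPA : ⊥ < pressure A s) (hPB : ⊥ < pressure B t)
    (C : ℝ) (hC : 0 < C)
    (h : ∀ n : ℕ, 0 < n → ∀ x : Fin n → Fin M,
      C⁻¹ * (Real.exp (-(n : ℝ) * (pressure A s).toReal) * opNorm (wordProd A x) ^ s) ≤
          Real.exp (-(n : ℝ) * (pressure B t).toReal) * opNorm (wordProd B x) ^ t ∧
        Real.exp (-(n : ℝ) * (pressure B t).toReal) * opNorm (wordProd B x) ^ t ≤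
          C * (Real.exp (-(n : ℝ) * (pressure A s).toReal) * opNorm (wordProd A x) ^ s)) :
    ∀ n : ℕ, 0 < n → ∀ x : Fin n → Fin M,
      Real.exp (-(n : ℝ) * (pressure A s).toReal) * specRad (wordProd A x) ^ s =
        Real.exp (-(n : ℝ) * (pressure B t).toReal) * specRad (wordProd B x) ^ t := by
  intro n hn x
  set PA := (pressure A s).toReal with hPA'
  set PB := (pressure B t).toReal with hPB'
  have rep : ∀ k : ℕ, ∃ w : List (Fin M), w.length = k * n ∧
      listProd A w = (wordProd A x) ^ k ∧ listProd B w = (wordProd B x) ^ k := by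
    intro k
    induction k with
    | zero => exact ⟨[], by simp, by simp [listProd], by simp [listProd]⟩
    | succ k ih =>
      obtain ⟨w, hw, ha, hb⟩ := ih
      refine ⟨w ++ List.ofFn x, ?_, ?_, ?_⟩
      · simp [hw]; ring
      · rw [listProd_append', listProd_ofFn', ha, pow_succ']
      · rw [listProd_append', listProd_ofFn', hb, pow_succ']
  have H : ∀ k : ℕ, 0 < k →
      (C⁻¹ * (Real.exp (-(k : ℝ) * ((n:ℝ) * PA)) * opNorm ((wordProd A x) ^ k) ^ s) ≤
          Real.exp (-(k : ℝ) * ((n:ℝ) * PB)) * opNorm ((wordProd B x) ^ k) ^ t ∧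
        Real.exp (-(k : ℝ) * ((n:ℝ) * PB)) * opNorm ((wordProd B x) ^ k) ^ t ≤
          C * (Real.exp (-(k : ℝ) * ((n:ℝ) * PA)) * opNorm ((wordProd A x) ^ k) ^ s)) := by
    intro k hk
    obtain ⟨w, hw, ha, hb⟩ := rep k
    have hlen : 0 < w.length := by rw [hw]; exact Nat.mul_pos hk hn
    have hh := h w.length hlen w.get
    rw [wordProd_get', wordProd_get', ha, hb] at hh
    have e : ∀ P : ℝ, -((w.length : ℝ)) * P = -(k : ℝ) * ((n:ℝ) * P) := by
      intro P; rw [hw]; push_cast; ring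
    rw [e PA, e PB] at hh
    exact hh
  have H1 : ∀ k : ℕ, 0 < k →
      Real.exp (-(k : ℝ) * ((n:ℝ) * PA)) * opNorm ((wordProd A x) ^ k) ^ s ≤
        C * (Real.exp (-(k : ℝ) * ((n:ℝ) * PB)) * opNorm ((wordProd B x) ^ k) ^ t) := by
    intro k hk
    have := (H k hk).1
    rw [inv_mul_le_iff₀ hC] at this
    exact this
  have H2 : ∀ k : ℕ, 0 < k →
      Real.exp (-(k : ℝ) * ((n:ℝ) * PB)) * opNorm ((wordProd B x) ^ k) ^ t ≤
        C * (Real.exp (-(k : ℝ) * ((n:ℝ) * PA)) * opNorm ((wordProd A x) ^ k) ^ s) :=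
    fun k hk => (H k hk).2
  have half1 := half_le (wordProd A x) (wordProd B x) s t ((n:ℝ)*PA) ((n:ℝ)*PB) C hs ht hC H1
  have half2 := half_le (wordProd B x) (wordProd A x) t s ((n:ℝ)*PB) ((n:ℝ)*PA) C ht hs hC H2
  rw [neg_mul, neg_mul]
  exact le_antisymm half1 half2
end

section
/- Let M ≥ 2, d ≥ 2, let A = (A_1,…,A_M) be an irreducible tuple of d×d real matrices, and set P := P(A,2) (which is finite by irreducibility). Let Q and Q̂ be symmetric positive definite d×d real matrices satisfying Σ_{i=1}^M A_i^T Q A_i = e^P Q, Σ_{i=1}^M A_i Q̂ A_i^T = e^P Q̂, and tr(Q Q̂) = 1. Then there exists a σ-invariant Borel probability measure μ on Σ_M (the Kusuoka measure of A) such that μ([x_1⋯x_n]) = e^{−nP} tr( Q̂ (A_{x_n}⋯A_{x_1})^T Q (A_{x_n}⋯A_{x_1}) ) for every n ≥ 1 and all x_1,…,x_n ∈ {1,…,M}. -/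
open MeasureTheory Filter Topology Matrix

section Construction

variable {M : ℕ} [NeZero M] (p : List (Fin M) → ℝ)

/-- left endpoint, defined on reversed words -/
noncomputable def arF : List (Fin M) → ℝ
  | [] => 0
  | i :: r => arF r + ∑ j ∈ Finset.univ.filter (fun j => j < i), p (r.reverse ++ [j])

noncomputable def aF (w : List (Fin M)) : ℝ := arF p w.reverse

@[simp] lemma aF_nil : aF p [] = 0 := rfl

lemma aF_append (w : List (Fin M)) (i : Fin M) :
    aF p (w ++ [i]) = aF p w + ∑ j ∈ Finset.univ.filter (fun j => j < i), p (w ++ [j]) := by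
  simp [aF, arF]

lemma aF_le_append (hnn : ∀ w, 0 ≤ p w) (w : List (Fin M)) (i : Fin M) : aF p w ≤ aF p (w ++ [i]) := by
  rw [aF_append]
  have : (0:ℝ) ≤ ∑ j ∈ Finset.univ.filter (fun j => j < i), p (w ++ [j]) :=
    Finset.sum_nonneg fun j _ => hnn _
  linarith

lemma aF_nonneg (hnn : ∀ w, 0 ≤ p w) (w : List (Fin M)) : 0 ≤ aF p w := by
  induction w using List.reverseRecOn with
  | nil => simp
  | append_singleton w i ih => exact ih.trans (aF_le_append p hnn w i)

lemma append_add_le (hnn : ∀ w, 0 ≤ p w) (hadd : ∀ w, ∑ i, p (w ++ [i]) = p w) (w : List (Fin M)) (i : Fin M) :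
    aF p (w ++ [i]) + p (w ++ [i]) ≤ aF p w + p w := by
  rw [aF_append, ← hadd w]
  have h1 : ∑ j : Fin M, p (w ++ [j]) =
      (∑ j ∈ Finset.univ.filter (fun j => j < i), p (w ++ [j])) +
      ∑ j ∈ Finset.univ.filter (fun j => ¬ j < i), p (w ++ [j]) :=
    (Finset.sum_filter_add_sum_filter_not _ _ _).symm
  have h2 : p (w ++ [i]) ≤ ∑ j ∈ Finset.univ.filter (fun j => ¬ j < i), p (w ++ [j]) := by
    refine Finset.single_le_sum (f := fun j => p (w ++ [j])) (fun j _ => hnn _) ?_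
    simp
  linarith

lemma append_lt_of_lt (hnn : ∀ w, 0 ≤ p w) {w : List (Fin M)} {i i' : Fin M} (h : i < i') :
    aF p (w ++ [i]) + p (w ++ [i]) ≤ aF p (w ++ [i']) := by
  rw [aF_append, aF_append]
  have hsub : insert i (Finset.univ.filter (fun j => j < i)) ⊆
      Finset.univ.filter (fun j => j < i') := by
    intro j hj
    simp only [Finset.mem_insert, Finset.mem_filter, Finset.mem_univ, true_and] at hj ⊢
    rcases hj with rfl | hj
    · exact h
    · exact hj.trans h
  have hins : ∑ j ∈ insert i (Finset.univ.filter (fun j => j < i)), p (w ++ [j]) =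
      p (w ++ [i]) + ∑ j ∈ Finset.univ.filter (fun j => j < i), p (w ++ [j]) := by
    rw [Finset.sum_insert (by simp)]
  have := Finset.sum_le_sum_of_subset_of_nonneg (f := fun j => p (w ++ [j])) hsub (fun j _ _ => hnn _)
  rw [hins] at this
  linarith

lemma aF_succ {w : List (Fin M)} {i : Fin M} (h : (i : ℕ) + 1 < M) :
    aF p (w ++ [⟨(i:ℕ)+1, h⟩]) = aF p (w ++ [i]) + p (w ++ [i]) := by
  rw [aF_append, aF_append]
  have : (Finset.univ.filter (fun j : Fin M => j < (⟨(i:ℕ)+1, h⟩ : Fin M))) =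
      insert i (Finset.univ.filter (fun j => j < i)) := by
    ext j
    simp only [Finset.mem_filter, Finset.mem_univ, true_and, Finset.mem_insert,
      Fin.lt_def, Fin.ext_iff]
    omega
  rw [this, Finset.sum_insert (by simp)]
  ring

lemma aF_last (hadd : ∀ w, ∑ i, p (w ++ [i]) = p w) (w : List (Fin M)) :
    aF p (w ++ [⟨M-1, Nat.sub_lt (Nat.pos_of_ne_zero (NeZero.ne M)) one_pos⟩]) +
      p (w ++ [⟨M-1, Nat.sub_lt (Nat.pos_of_ne_zero (NeZero.ne M)) one_pos⟩]) =
    aF p w + p w := by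
  set l : Fin M := ⟨M-1, Nat.sub_lt (Nat.pos_of_ne_zero (NeZero.ne M)) one_pos⟩
  rw [aF_append, ← hadd w]
  have : (Finset.univ : Finset (Fin M)) = insert l (Finset.univ.filter (fun j => j < l)) := by
    ext j
    simp only [Finset.mem_univ, Finset.mem_insert, Finset.mem_filter, true_and, true_iff,
    Fin.lt_def, Fin.ext_iff]
    have := j.isLt
    have hl : (l : ℕ) = M - 1 := rfl
    omega
  conv_rhs => rw [this, Finset.sum_insert (by simp)]
  ring

lemma aF_zero (w : List (Fin M)) :
    aF p (w ++ [⟨0, Nat.pos_of_ne_zero (NeZero.ne M)⟩]) = aF p w := by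
  rw [aF_append]
  have : (Finset.univ.filter (fun j : Fin M => j < (⟨0, Nat.pos_of_ne_zero (NeZero.ne M)⟩ : Fin M))) = ∅ := by
    ext j; simp [Fin.lt_def]
  simp [this]

end Construction

section Construction2

variable {M : ℕ} [NeZero M] (p : List (Fin M) → ℝ)

/-- index of the child interval containing `t` -/
noncomputable def cIdx (t : ℝ) (w : List (Fin M)) : Fin M :=
  if h : (Finset.univ.filter (fun i : Fin M => aF p (w ++ [i]) ≤ t)).Nonempty then
    (Finset.univ.filter (fun i : Fin M => aF p (w ++ [i]) ≤ t)).max' h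
  else ⟨0, Nat.pos_of_ne_zero (NeZero.ne M)⟩

lemma cIdx_mono (w : List (Fin M)) : Monotone (fun t => cIdx p t w) := by
  intro t t' htt'
  simp only [cIdx]
  by_cases h : (Finset.univ.filter (fun i : Fin M => aF p (w ++ [i]) ≤ t)).Nonempty
  · have hsub : (Finset.univ.filter (fun i : Fin M => aF p (w ++ [i]) ≤ t)) ⊆
        (Finset.univ.filter (fun i : Fin M => aF p (w ++ [i]) ≤ t')) := by
      intro j hj
      simp only [Finset.mem_filter, Finset.mem_univ, true_and] at hj ⊢
      linarith
    have h' : (Finset.univ.filter (fun i : Fin M => aF p (w ++ [i]) ≤ t')).Nonempty :=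
      h.mono hsub
    rw [dif_pos h, dif_pos h']
    exact Finset.max'_subset h hsub
  · rw [dif_neg h]
    by_cases h' : (Finset.univ.filter (fun i : Fin M => aF p (w ++ [i]) ≤ t')).Nonempty
    · rw [dif_pos h']
      exact Fin.mk_le_of_le_val (Nat.zero_le _)
    · rw [dif_neg h']

/-- characterization of `cIdx` on the parent interval -/
lemma cIdx_eq_iff (hnn : ∀ w, 0 ≤ p w) (hadd : ∀ w, ∑ i, p (w ++ [i]) = p w)
    {t : ℝ} {w : List (Fin M)} (h1 : aF p w ≤ t) (h2 : t < aF p w + p w) (i : Fin M) :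
    cIdx p t w = i ↔ aF p (w ++ [i]) ≤ t ∧ t < aF p (w ++ [i]) + p (w ++ [i]) := by
  set S := Finset.univ.filter (fun i : Fin M => aF p (w ++ [i]) ≤ t) with hS
  have h0mem : (⟨0, Nat.pos_of_ne_zero (NeZero.ne M)⟩ : Fin M) ∈ S := by
    simp only [hS, Finset.mem_filter, Finset.mem_univ, true_and]
    rw [aF_zero]; exact h1
  have hne : S.Nonempty := ⟨_, h0mem⟩
  have hc : cIdx p t w = S.max' hne := dif_pos hne
  set c := S.max' hne with hcc
  have hcmem : c ∈ S := S.max'_mem hne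
  have hcle : aF p (w ++ [c]) ≤ t := by
    simpa only [hS, Finset.mem_filter, Finset.mem_univ, true_and] using hcmem
  have hclt : t < aF p (w ++ [c]) + p (w ++ [c]) := by
    by_contra hcon
    push_neg at hcon
    by_cases hlast : (c : ℕ) + 1 < M
    · have hmem : (⟨(c:ℕ)+1, hlast⟩ : Fin M) ∈ S := by
        simp only [hS, Finset.mem_filter, Finset.mem_univ, true_and]
        rw [aF_succ]; exact hcon
      have := Finset.le_max' S _ hmem
      rw [← hcc] at this
      simp only [Fin.le_def] at this
      omega
    · have hceq : c = ⟨M-1, Nat.sub_lt (Nat.pos_of_ne_zero (NeZero.ne M)) one_pos⟩ := by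
        have h := c.isLt
        apply Fin.ext
        show (c : ℕ) = M - 1
        omega
      rw [hceq] at hcon
      have := aF_last p hadd w
      linarith
  constructor
  · rintro rfl
    rw [hc] at *
    exact ⟨hcle, hclt⟩
  · rintro ⟨hi1, hi2⟩
    rw [hc]
    rcases lt_trichotomy i c with hlt | heq | hgt
    · exfalso
      have := append_lt_of_lt p hnn (w := w) hlt
      linarith
    · exact heq.symm
    · exfalso
      have := append_lt_of_lt p hnn (w := w) hgt
      linarith

/-- measurability of the level sets of `cIdx` -/
lemma measurableSet_cIdx (w : List (Fin M)) (i : Fin M) :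
    MeasurableSet {t : ℝ | cIdx p t w = i} := by
  have h : Set.OrdConnected {t : ℝ | cIdx p t w = i} := by
    constructor
    intro t1 h1 t2 h2 t ht
    simp only [Set.mem_setOf_eq] at h1 h2 ⊢
    have ha : cIdx p t1 w ≤ cIdx p t w := cIdx_mono p w ht.1
    have hb : cIdx p t w ≤ cIdx p t2 w := cIdx_mono p w ht.2
    rw [h1] at ha; rw [h2] at hb
    exact le_antisymm hb ha
  exact h.measurableSet

/-- the word of length `n` associated to `t` -/
noncomputable def wordF (t : ℝ) : ℕ → List (Fin M)
  | 0 => []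
  | n+1 => wordF t n ++ [cIdx p t (wordF t n)]

lemma wordF_length (t : ℝ) (n : ℕ) : (wordF p t n).length = n := by
  induction n with
  | zero => rfl
  | succ n ih => simp [wordF, ih]

lemma wordF_eq_iff (hnn : ∀ w, 0 ≤ p w) (hadd : ∀ w, ∑ i, p (w ++ [i]) = p w)
    (h0 : p [] = 1) (w : List (Fin M)) :
    ∀ t : ℝ, 0 ≤ t → t < 1 →
      (wordF p t w.length = w ↔ aF p w ≤ t ∧ t < aF p w + p w) := by
  induction w using List.reverseRecOn with
  | nil =>
    intro t ht0 ht1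
    simp [wordF, h0, ht0, ht1]
  | append_singleton w i ih =>
    intro t ht0 ht1
    have hlen : (w ++ [i]).length = w.length + 1 := by simp
    rw [hlen]
    have hsplit : wordF p t (w.length + 1) = w ++ [i] ↔
        wordF p t w.length = w ∧ cIdx p t (wordF p t w.length) = i := by
      constructor
      · intro h
        have := List.append_inj' h.symm (by simp)
        exact ⟨this.1.symm, by simpa using this.2.symm⟩
      · rintro ⟨h1, h2⟩
        simp only [wordF]
        rw [h2, h1]
    rw [hsplit]
    constructor
    · rintro ⟨h1, h2⟩
      have hiv := (ih t ht0 ht1).mp h1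
      rw [h1] at h2
      exact (cIdx_eq_iff p hnn hadd hiv.1 hiv.2 i).mp h2
    · rintro ⟨h1', h2'⟩
      have hparent1 : aF p w ≤ t := (aF_le_append p hnn w i).trans h1'
      have hparent2 : t < aF p w + p w := lt_of_lt_of_le h2' (append_add_le p hnn hadd w i)
      have h1 : wordF p t w.length = w := (ih t ht0 ht1).mpr ⟨hparent1, hparent2⟩
      refine ⟨h1, ?_⟩
      rw [h1]
      exact (cIdx_eq_iff p hnn hadd hparent1 hparent2 i).mpr ⟨h1', h2'⟩

lemma aF_add_le_one (hnn : ∀ w, 0 ≤ p w) (hadd : ∀ w, ∑ i, p (w ++ [i]) = p w)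
    (h0 : p [] = 1) (w : List (Fin M)) : aF p w + p w ≤ 1 := by
  induction w using List.reverseRecOn with
  | nil => simp [h0]
  | append_singleton w i ih => exact (append_add_le p hnn hadd w i).trans ih

end Construction2

section Construction3

variable {M : ℕ} [NeZero M] (p : List (Fin M) → ℝ)

/-- the coding map `[0,1) → {0,…,M-1}^ℕ` -/
noncomputable def fF (t : ℝ) (n : ℕ) : Fin M := cIdx p t (wordF p t n)

lemma wordF_eq_ofFn (t : ℝ) (n : ℕ) :
    wordF p t n = List.ofFn (fun i : Fin n => fF p t (i : ℕ)) := by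
  induction n with
  | zero => rfl
  | succ n ih =>
    rw [List.ofFn_succ']
    simp only [Fin.coe_castSucc, Fin.val_last, List.concat_eq_append]
    rw [← ih]
    rfl

lemma measurableSet_wordF (n : ℕ) (w : List (Fin M)) :
    MeasurableSet {t : ℝ | wordF p t n = w} := by
  induction n generalizing w with
  | zero =>
    by_cases h : w = []
    · subst h; simp only [wordF]; simp
    · have : {t : ℝ | wordF p t 0 = w} = ∅ := by
        ext t; simp only [wordF, Set.mem_setOf_eq, Set.mem_empty_iff_false, iff_false]
        exact fun hh => h hh.symm
      rw [this]; exact MeasurableSet.empty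
  | succ n ih =>
    by_cases h : w = []
    · subst h
      have : {t : ℝ | wordF p t (n+1) = []} = ∅ := by
        ext t; simp [wordF]
      rw [this]; exact MeasurableSet.empty
    · have hw : w = w.dropLast ++ [w.getLast h] := (List.dropLast_append_getLast h).symm
      have hset : {t : ℝ | wordF p t (n+1) = w} =
          {t : ℝ | wordF p t n = w.dropLast} ∩ {t : ℝ | cIdx p t w.dropLast = w.getLast h} := by
        ext t
        simp only [Set.mem_setOf_eq, Set.mem_inter_iff]
        constructor
        · intro hh
          rw [hw] at hh
          simp only [wordF] at hh
          have := List.append_inj' hh (by simp)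
          have h1 := this.1
          have h2 : cIdx p t (wordF p t n) = w.getLast h := by simpa using this.2
          rw [h1] at h2
          exact ⟨h1, h2⟩
        · rintro ⟨h1, h2⟩
          simp only [wordF]
          rw [h1, h2, ← hw]
      rw [hset]
      exact (ih _).inter (measurableSet_cIdx p _ _)

lemma measurable_fF : Measurable (fF p) := by
  refine measurable_pi_lambda _ (fun n => ?_)
  refine measurable_to_countable' (fun i => ?_)
  have hset : (fun t => fF p t n) ⁻¹' {i} =
      ⋃ v : Fin n → Fin M, {t : ℝ | wordF p t (n+1) = List.ofFn v ++ [i]} := by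
    ext t
    simp only [Set.mem_preimage, Set.mem_singleton_iff, Set.mem_iUnion, Set.mem_setOf_eq]
    constructor
    · intro h
      refine ⟨fun k => fF p t (k : ℕ), ?_⟩
      have hstep : wordF p t (n+1) = wordF p t n ++ [fF p t n] := rfl
      rw [hstep, h, wordF_eq_ofFn]
    · rintro ⟨v, hv⟩
      simp only [wordF] at hv
      have := List.append_inj' hv (by simp [wordF_length])
      simpa [fF] using this.2
  rw [hset]
  exact MeasurableSet.iUnion (fun v => measurableSet_wordF p _ _)

lemma mem_cyl_iff (t : ℝ) (w : List (Fin M)) :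
    fF p t ∈ cyl w ↔ wordF p t w.length = w := by
  rw [wordF_eq_ofFn]
  constructor
  · intro h
    apply List.ext_get (by simp)
    intro n h1 h2
    simp only [List.get_ofFn]
    simpa using h ⟨n, h2⟩
  · intro h i
    have hi : (i : ℕ) < (List.ofFn fun k : Fin w.length => fF p t (k : ℕ)).length := by simp
    have h2 := List.getElem_of_eq h hi
    simpa [List.get_eq_getElem] using h2

section Construction4

variable {M : ℕ}

lemma measurableSet_cyl (w : List (Fin M)) : MeasurableSet (cyl w) := by
  have : cyl w = ⋂ i : Fin w.length, (fun y : ℕ → Fin M => y (i : ℕ)) ⁻¹' {w.get i} := by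
    ext y; simp [cyl]
  rw [this]
  exact MeasurableSet.iInter fun i => (measurable_pi_apply _) (measurableSet_singleton _)

lemma cyl_nil : cyl ([] : List (Fin M)) = Set.univ := by
  ext y; simp [cyl]

lemma cyl_subset_of_prefix {w v : List (Fin M)} (hlen : w.length ≤ v.length)
    (y : ℕ → Fin M) (hyw : y ∈ cyl w) (hyv : y ∈ cyl v) : cyl v ⊆ cyl w := by
  intro z hz i
  have h1 : (i : ℕ) < v.length := lt_of_lt_of_le i.isLt hlen
  have h2 := hyv ⟨(i : ℕ), h1⟩
  have h3 := hyw i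
  have h4 := hz ⟨(i : ℕ), h1⟩
  rw [h4, ← h2, h3]

lemma isPiSystem_cyl : IsPiSystem {s : Set (ℕ → Fin M) | ∃ w : List (Fin M), s = cyl w} := by
  rintro s ⟨w, rfl⟩ t ⟨v, rfl⟩ hne
  obtain ⟨y, hyw, hyv⟩ := hne
  rcases le_total w.length v.length with h | h
  · have := cyl_subset_of_prefix h y hyw hyv
    exact ⟨v, by rw [Set.inter_eq_right.mpr this]⟩
  · have := cyl_subset_of_prefix h y hyv hyw
    exact ⟨w, by rw [Set.inter_eq_left.mpr this]⟩

lemma eval_preimage_eq_iUnion [NeZero M] (n : ℕ) (j : Fin M) :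
    (fun y : ℕ → Fin M => y n) ⁻¹' {j} =
      ⋃ v : Fin n → Fin M, cyl (List.ofFn v ++ [j]) := by
  ext y
  simp only [Set.mem_preimage, Set.mem_singleton_iff, Set.mem_iUnion]
  constructor
  · intro h
    refine ⟨fun k => y (k : ℕ), ?_⟩
    intro i
    have hlen : (List.ofFn (fun k : Fin n => y (k : ℕ)) ++ [j]).length = n + 1 := by simp
    rcases Nat.lt_or_ge (i : ℕ) n with hi | hi
    · have : (List.ofFn (fun k : Fin n => y (k : ℕ)) ++ [j]).get i = y (i : ℕ) := by
        rw [List.get_eq_getElem, List.getElem_append_left (by simpa using hi)]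
        simp
      rw [this]
    · have hieq : (i : ℕ) = n := by
        have h2 := i.isLt
        simp only [List.length_append, List.length_ofFn, List.length_singleton] at h2
        omega
      have hget : (List.ofFn (fun k : Fin n => y (k : ℕ)) ++ [j]).get i = j := by
        rw [List.get_eq_getElem, List.getElem_append_right (by simp [hieq])]
        simp [hieq]
      rw [hget, hieq, h]
  · rintro ⟨v, hv⟩
    have hlen : (List.ofFn v ++ [j]).length = n + 1 := by simp
    have hn : n < (List.ofFn v ++ [j]).length := by omega
    have := hv ⟨n, hn⟩
    rw [this]
    rw [List.get_eq_getElem, List.getElem_append_right (by simp)]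
    simp

lemma pi_eq_generateFrom_cyl [NeZero M] :
    (inferInstance : MeasurableSpace (ℕ → Fin M)) =
      MeasurableSpace.generateFrom {s : Set (ℕ → Fin M) | ∃ w : List (Fin M), s = cyl w} := by
  apply le_antisymm
  · rw [show (inferInstance : MeasurableSpace (ℕ → Fin M)) = MeasurableSpace.pi from rfl,
      MeasurableSpace.pi_eq_generateFrom_projections]
    refine MeasurableSpace.generateFrom_le ?_
    rintro s ⟨n, t, ht, rfl⟩
    have hsplit : Function.eval n ⁻¹' t =
        ⋃ j ∈ t, (fun y : ℕ → Fin M => y n) ⁻¹' {j} := by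
      ext y; simp [Function.eval]
    rw [hsplit]
    refine MeasurableSet.biUnion t.to_countable (fun j _ => ?_)
    rw [eval_preimage_eq_iUnion n j]
    exact MeasurableSet.iUnion fun v =>
      MeasurableSpace.measurableSet_generateFrom ⟨_, rfl⟩
  · refine MeasurableSpace.generateFrom_le ?_
    rintro s ⟨w, rfl⟩
    exact measurableSet_cyl w

lemma measure_ext_cyl (μ ν : Measure (ℕ → Fin M)) [NeZero M] [IsFiniteMeasure μ]
    (h : ∀ w : List (Fin M), μ (cyl w) = ν (cyl w)) : μ = ν := by
  refine MeasureTheory.ext_of_generate_finite _ pi_eq_generateFrom_cyl isPiSystem_cyl ?_ ?_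
  · rintro s ⟨w, rfl⟩; exact h w
  · rw [← cyl_nil]; exact h []

lemma measurable_shift : Measurable (shift (M := M)) :=
  measurable_pi_lambda _ (fun n => measurable_pi_apply (n + 1))

lemma shift_preimage_cyl (w : List (Fin M)) :
    shift (M := M) ⁻¹' (cyl w) = ⋃ i : Fin M, cyl (i :: w) := by
  ext y
  simp only [Set.mem_preimage, Set.mem_iUnion]
  constructor
  · intro h
    refine ⟨y 0, fun k => ?_⟩
    rcases Nat.eq_zero_or_pos (k : ℕ) with hk | hk
    · simp only [hk]
      have : (y 0 :: w).get k = (y 0 :: w).get ⟨0, by simp⟩ := by congr 1; exact Fin.ext hk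
      rw [this]; rfl
    · obtain ⟨m, hm⟩ := Nat.exists_eq_add_of_lt hk
      have hk' : (k : ℕ) = m + 1 := by omega
      have hmw : m < w.length := by
        have := k.isLt; simp only [List.length_cons] at this; omega
      have := h ⟨m, hmw⟩
      have hget : (y 0 :: w).get k = w.get ⟨m, hmw⟩ := by
        have : k = Fin.mk (m+1) (by simp; omega) := Fin.ext hk'
        rw [this]; rfl
      rw [hget, ← this]
      simp only [shift]
      congr 1
  · rintro ⟨i, hi⟩ k
    have hk : (k : ℕ) + 1 < (i :: w).length := by simp
    have := hi ⟨(k : ℕ) + 1, hk⟩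
    have hget : (i :: w).get ⟨(k : ℕ) + 1, hk⟩ = w.get k := rfl
    rw [hget] at this
    exact this

theorem exists_invariant_measure [NeZero M] (p : List (Fin M) → ℝ)
    (h0 : p [] = 1) (hnn : ∀ w, 0 ≤ p w)
    (hadd : ∀ w, ∑ i, p (w ++ [i]) = p w)
    (hpre : ∀ w, ∑ i, p (i :: w) = p w) :
    ∃ μ : Measure (ℕ → Fin M), IsProbabilityMeasure μ ∧
      MeasurePreserving (shift (M := M)) μ μ ∧
      ∀ w : List (Fin M), μ (cyl w) = ENNReal.ofReal (p w) := by
  classical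
  set μ : Measure (ℕ → Fin M) :=
    Measure.map (fF p) (volume.restrict (Set.Ico (0:ℝ) 1)) with hμ
  have hcylval : ∀ w : List (Fin M), μ (cyl w) = ENNReal.ofReal (p w) := by
    intro w
    rw [hμ, Measure.map_apply (measurable_fF p) (measurableSet_cyl w),
      Measure.restrict_apply ((measurable_fF p) (measurableSet_cyl w))]
    have hset : fF p ⁻¹' cyl w ∩ Set.Ico 0 1 = Set.Ico (aF p w) (aF p w + p w) := by
      ext t
      simp only [Set.mem_inter_iff, Set.mem_preimage, Set.mem_Ico]
      constructor
      · rintro ⟨h1, h2, h3⟩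
        rw [mem_cyl_iff] at h1
        exact (wordF_eq_iff p hnn hadd h0 w t h2 h3).mp h1
      · rintro ⟨h1, h2⟩
        have ht0 : (0:ℝ) ≤ t := le_trans (aF_nonneg p hnn w) h1
        have ht1 : t < 1 := lt_of_lt_of_le h2 (aF_add_le_one p hnn hadd h0 w)
        refine ⟨?_, ht0, ht1⟩
        rw [mem_cyl_iff]
        exact (wordF_eq_iff p hnn hadd h0 w t ht0 ht1).mpr ⟨h1, h2⟩
    rw [hset, Real.volume_Ico]
    congr 1
    ring
  have hprob : IsProbabilityMeasure μ := by
    constructor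
    rw [← cyl_nil, hcylval [], h0, ENNReal.ofReal_one]
  refine ⟨μ, hprob, ?_, hcylval⟩
  have hmap : Measure.map (shift (M := M)) μ = μ := by
    have : IsFiniteMeasure (Measure.map (shift (M := M)) μ) := by
      constructor
      rw [Measure.map_apply measurable_shift MeasurableSet.univ]
      simp only [Set.preimage_univ]
      exact measure_lt_top μ _
    refine measure_ext_cyl _ _ (fun w => ?_)
    rw [Measure.map_apply measurable_shift (measurableSet_cyl w), shift_preimage_cyl]
    have hdisj : Pairwise (Function.onFun Disjoint (fun i : Fin M => cyl (i :: w))) := by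
      intro i j hij
      refine Set.disjoint_left.mpr (fun y hyi hyj => ?_)
      have h1 := hyi ⟨0, by simp⟩
      have h2 := hyj ⟨0, by simp⟩
      simp only [List.get] at h1 h2
      exact hij (by rw [← h1, ← h2])
    rw [measure_iUnion hdisj (fun i => measurableSet_cyl _)]
    have : ∀ i : Fin M, μ (cyl (i :: w)) = ENNReal.ofReal (p (i :: w)) := fun i => hcylval _
    rw [tsum_fintype]
    simp_rw [this]
    rw [← ENNReal.ofReal_sum_of_nonneg (fun i _ => hnn _), hpre w, hcylval w]
  exact ⟨measurable_shift, hmap⟩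

end Construction4

section Kusuoka

variable {M d : ℕ}

lemma listProd_nil (A : Fin M → Matrix (Fin d) (Fin d) ℝ) : listProd A [] = 1 := by
  simp [listProd]

lemma listProd_append_singleton (A : Fin M → Matrix (Fin d) (Fin d) ℝ)
    (w : List (Fin M)) (i : Fin M) :
    listProd A (w ++ [i]) = A i * listProd A w := by
  simp [listProd]

lemma listProd_cons (A : Fin M → Matrix (Fin d) (Fin d) ℝ)
    (w : List (Fin M)) (i : Fin M) :
    listProd A (i :: w) = listProd A w * A i := by
  simp [listProd]

lemma psd_trace_nonneg {N : Matrix (Fin d) (Fin d) ℝ} (hN : N.PosSemidef) :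
    0 ≤ N.trace := by
  rw [Matrix.trace]
  refine Finset.sum_nonneg fun i _ => ?_
  exact hN.diag_nonneg

open scoped MatrixOrder in
lemma trace_mul_psd_nonneg {P N : Matrix (Fin d) (Fin d) ℝ}
    (hP : P.PosSemidef) (hN : N.PosSemidef) : 0 ≤ (P * N).trace := by
  have hS : CFC.sqrt P * CFC.sqrt P = P :=
    CFC.sqrt_mul_sqrt_self P (Matrix.nonneg_iff_posSemidef.mpr hP)
  have hherm : (CFC.sqrt P).conjTranspose = CFC.sqrt P :=
    (Matrix.nonneg_iff_posSemidef.mp (CFC.sqrt_nonneg P)).1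
  have h1 : (CFC.sqrt P * N * CFC.sqrt P).trace = (P * N).trace := by
    rw [Matrix.trace_mul_cycle, hS]
  rw [← h1]
  refine psd_trace_nonneg ?_
  have := hN.conjTranspose_mul_mul_same (CFC.sqrt P)
  rwa [hherm] at this

lemma kusuoka_nonneg (A : Fin M → Matrix (Fin d) (Fin d) ℝ)
    {Q Qh : Matrix (Fin d) (Fin d) ℝ} (hQ : Q.PosSemidef) (hQh : Qh.PosSemidef)
    (B : Matrix (Fin d) (Fin d) ℝ) :
    0 ≤ (Qh * Bᵀ * Q * B).trace := by
  have hpsd : (Bᵀ * Q * B).PosSemidef := by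
    have := hQ.conjTranspose_mul_mul_same B
    rwa [Matrix.conjTranspose_eq_transpose_of_trivial] at this
  have : Qh * Bᵀ * Q * B = Qh * (Bᵀ * Q * B) := by noncomm_ring
  rw [this]
  exact trace_mul_psd_nonneg hQh hpsd

end Kusuoka

section Final

theorem kusuoka_exists {M d : ℕ} (hM : 2 ≤ M)
    (A : Fin M → Matrix (Fin d) (Fin d) ℝ) (Pv : ℝ)
    (Q Qh : Matrix (Fin d) (Fin d) ℝ) (hQ : Q.PosDef) (hQh : Qh.PosDef)
    (hQe : (∑ i, (A i)ᵀ * Q * A i) = Real.exp Pv • Q)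
    (hQhe : (∑ i, A i * Qh * (A i)ᵀ) = Real.exp Pv • Qh)
    (htr : (Q * Qh).trace = 1) :
    ∃ μ : Measure (ℕ → Fin M), IsProbabilityMeasure μ ∧
      MeasurePreserving (shift (M := M)) μ μ ∧
      ∀ w : List (Fin M),
        μ (cyl w) = ENNReal.ofReal
          (Real.exp (-(w.length : ℝ) * Pv) *
            (Qh * (listProd A w)ᵀ * Q * listProd A w).trace) := by
  have : NeZero M := ⟨by omega⟩
  set p : List (Fin M) → ℝ := fun w =>
    Real.exp (-(w.length : ℝ) * Pv) * (Qh * (listProd A w)ᵀ * Q * listProd A w).trace with hp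
  have h0 : p [] = 1 := by
    simp only [hp, listProd_nil, List.length_nil, Nat.cast_zero, neg_zero, zero_mul,
      Real.exp_zero, one_mul, Matrix.transpose_one, Matrix.mul_one]
    rw [Matrix.trace_mul_comm]
    exact htr
  have hnn : ∀ w, 0 ≤ p w := fun w =>
    mul_nonneg (Real.exp_nonneg _) (kusuoka_nonneg A hQ.posSemidef hQh.posSemidef _)
  have hadd : ∀ w, ∑ i, p (w ++ [i]) = p w := by
    intro w
    set B := listProd A w with hB
    have hterm : ∀ i : Fin M, p (w ++ [i]) =
        Real.exp (-((w.length : ℝ) + 1) * Pv) *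
          (Qh * Bᵀ * ((A i)ᵀ * Q * A i) * B).trace := by
      intro i
      simp only [hp, listProd_append_singleton, List.length_append, List.length_singleton]
      congr 2
      · push_cast; ring
      · rw [Matrix.transpose_mul]; noncomm_ring
    rw [Finset.sum_congr rfl (fun i _ => hterm i), ← Finset.mul_sum, ← Matrix.trace_sum]
    have hmat : ∑ i, Qh * Bᵀ * ((A i)ᵀ * Q * A i) * B =
        Qh * Bᵀ * (∑ i, (A i)ᵀ * Q * A i) * B := by
      rw [Finset.mul_sum, Finset.sum_mul]
    rw [hmat, hQe, Matrix.mul_smul, Matrix.smul_mul, Matrix.trace_smul]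
    simp only [smul_eq_mul, hp]
    rw [← mul_assoc, ← Real.exp_add]
    congr 2
    ring
  have hpre : ∀ w, ∑ i, p (i :: w) = p w := by
    intro w
    set B := listProd A w with hB
    have hterm : ∀ i : Fin M, p (i :: w) =
        Real.exp (-((w.length : ℝ) + 1) * Pv) *
          ((A i * Qh * (A i)ᵀ) * (Bᵀ * Q * B)).trace := by
      intro i
      simp only [hp, listProd_cons, List.length_cons]
      rw [show Qh * (B * A i)ᵀ * Q * (B * A i) =
          (Qh * (A i)ᵀ * (Bᵀ * Q * B)) * A i from by
        rw [Matrix.transpose_mul]; noncomm_ring]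
      rw [Matrix.trace_mul_comm]
      congr 2
      · push_cast; ring
      · noncomm_ring
    rw [Finset.sum_congr rfl (fun i _ => hterm i), ← Finset.mul_sum, ← Matrix.trace_sum]
    have hmat : ∑ i, (A i * Qh * (A i)ᵀ) * (Bᵀ * Q * B) =
        (∑ i, A i * Qh * (A i)ᵀ) * (Bᵀ * Q * B) := by
      rw [Finset.sum_mul]
    rw [hmat, hQhe, Matrix.smul_mul, Matrix.trace_smul]
    simp only [smul_eq_mul, hp]
    rw [← mul_assoc, ← Real.exp_add]
    have hmm : Qh * Bᵀ * Q * B = Qh * (Bᵀ * Q * B) := by noncomm_ring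
    rw [hmm, Matrix.trace_mul_comm]
    congr 2
    ring
  obtain ⟨μ, h1, h2, h3⟩ := exists_invariant_measure p h0 hnn hadd hpre
  exact ⟨μ, h1, h2, h3⟩

end Final


/-- existence of the Kusuoka measure: a shift-invariant Borel probability measure
whose cylinder values are `e^{-nP} tr( Q̂ (A_{x_n}⋯A_{x_1})ᵀ Q (A_{x_n}⋯A_{x_1}) )`. -/
theorem stmt_18 {M d : ℕ} (hM : 2 ≤ M) (hd : 2 ≤ d)
    (A : Fin M → Matrix (Fin d) (Fin d) ℝ) (hA : IsIrredTuple A)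
    (Q Qh : Matrix (Fin d) (Fin d) ℝ) (hQ : Q.PosDef) (hQh : Qh.PosDef)
    (hQe : (∑ i, (A i)ᵀ * Q * A i) = Real.exp (pressure A 2).toReal • Q)
    (hQhe : (∑ i, A i * Qh * (A i)ᵀ) = Real.exp (pressure A 2).toReal • Qh)
    (htr : (Q * Qh).trace = 1) :
    ∃ μ : Measure (ℕ → Fin M), IsProbabilityMeasure μ ∧
      MeasurePreserving (shift (M := M)) μ μ ∧
      ∀ w : List (Fin M), w ≠ [] →
        μ (cyl w) = ENNReal.ofReal
          (Real.exp (-(w.length : ℝ) * (pressure A 2).toReal) *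
            (Qh * (listProd A w)ᵀ * Q * listProd A w).trace) := by
  obtain ⟨μ, h1, h2, h3⟩ :=
    kusuoka_exists hM A ((pressure A 2).toReal) Q Qh hQ hQh hQe hQhe htr
  exact ⟨μ, h1, h2, fun w _ => h3 w⟩
end Construction3
end

section
/- Let M ≥ 2, d ≥ 2, let A = (A_1,…,A_M) be an irreducible tuple of d×d real matrices, and set P := P(A,2) (which is finite by irreducibility). Let Q and Q̂ be symmetric positive definite d×d real matrices satisfying Σ_{i=1}^M A_i^T Q A_i = e^P Q, Σ_{i=1}^M A_i Q̂ A_i^T = e^P Q̂, and tr(Q Q̂) = 1, and let μ be a Borel probability measure on Σ_M with μ([x_1⋯x_n]) = e^{−nP} tr( Q̂ (A_{x_n}⋯A_{x_1})^T Q (A_{x_n}⋯A_{x_1}) ) for every cylinder. Then μ satisfies the Gibbs inequality for (A,2) with pressure constant P: there exists C > 0 such that C^{−1} μ([x_1⋯x_n]) ≤ e^{−nP} ‖A_{x_n}⋯A_{x_1}‖² ≤ C μ([x_1⋯x_n]) for every n ≥ 1 and all x_1,…,x_n ∈ {1,…,M}. -/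
open MeasureTheory Filter Topology Matrix

set_option synthInstance.maxHeartbeats 1000000
set_option maxHeartbeats 2000000

section Helpers

lemma opNorm_nonneg' {d : ℕ} (X : Matrix (Fin d) (Fin d) ℝ) : 0 ≤ opNorm X :=
  norm_nonneg _

lemma opNorm_mul_le' {d : ℕ} (X Y : Matrix (Fin d) (Fin d) ℝ) :
    opNorm (X * Y) ≤ opNorm X * opNorm Y := by
  unfold opNorm
  rw [_root_.map_mul]
  exact norm_mul_le _ _

lemma transpose_eq_conjTranspose' {d : ℕ} (B : Matrix (Fin d) (Fin d) ℝ) : Bᵀ = Bᴴ := by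
  ext i j; simp [Matrix.conjTranspose_apply]

lemma opNorm_transpose' {d : ℕ} (B : Matrix (Fin d) (Fin d) ℝ) : opNorm Bᵀ = opNorm B := by
  rw [transpose_eq_conjTranspose']
  unfold opNorm
  rw [show Bᴴ = star B from rfl, map_star (Matrix.toEuclideanCLM (𝕜 := ℝ)) B]
  rw [ContinuousLinearMap.star_eq_adjoint]
  exact (ContinuousLinearMap.adjoint : _ ≃ₗᵢ⋆[ℝ] _).norm_map _

lemma trace_nonneg_of_psd' {d : ℕ} {P : Matrix (Fin d) (Fin d) ℝ} (hP : P.PosSemidef) :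
    0 ≤ P.trace := by
  rw [Matrix.trace]
  apply Finset.sum_nonneg
  intro i _
  have := hP.dotProduct_mulVec_nonneg (Pi.single i 1)
  simpa [dotProduct, Matrix.mulVec, Pi.single_apply, Finset.sum_ite_eq,
    Matrix.diag] using this

lemma trace_mul_nonneg' {d : ℕ} {P C : Matrix (Fin d) (Fin d) ℝ} (hP : P.PosSemidef)
    (hC : C.PosSemidef) : 0 ≤ (P * C).trace := by
  obtain ⟨L, rfl⟩ : ∃ L : Matrix (Fin d) (Fin d) ℝ, P = star L * L := by
    open scoped MatrixOrder in exact CStarAlgebra.nonneg_iff_eq_star_mul_self.mp hP.nonneg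
  rw [Matrix.mul_assoc, Matrix.trace_mul_comm]
  exact trace_nonneg_of_psd' (hC.mul_mul_conjTranspose_same L)

lemma entry_le_opNorm' {d : ℕ} (B : Matrix (Fin d) (Fin d) ℝ) (i j : Fin d) :
    |B i j| ≤ opNorm B := by
  have h := (Matrix.toEuclideanCLM (𝕜 := ℝ) B).le_opNorm (EuclideanSpace.single j (1:ℝ))
  rw [EuclideanSpace.norm_single, norm_one, mul_one] at h
  refine le_trans ?_ h
  have key : (Matrix.toEuclideanCLM (𝕜 := ℝ) B (EuclideanSpace.single j (1:ℝ))) =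
      (WithLp.equiv 2 _).symm (B.mulVec (Pi.single j 1)) := by
    rfl
  rw [key]
  have hnorm : ‖(WithLp.equiv 2 (Fin d → ℝ)).symm (B.mulVec (Pi.single j 1))‖
      = Real.sqrt (∑ k, ‖B.mulVec (Pi.single j 1) k‖ ^ 2) := EuclideanSpace.norm_eq _
  rw [hnorm]
  have h1 : |B i j| = Real.sqrt ((B.mulVec (Pi.single j 1) i) ^ 2) := by
    simp [Real.sqrt_sq_eq_abs]
  rw [h1]
  apply Real.sqrt_le_sqrt
  calc (B.mulVec (Pi.single j 1) i) ^ 2 = ‖B.mulVec (Pi.single j 1) i‖ ^ 2 := by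
        rw [Real.norm_eq_abs, sq_abs]
    _ ≤ ∑ k, ‖B.mulVec (Pi.single j 1) k‖ ^ 2 :=
        Finset.single_le_sum (f := fun k => ‖B.mulVec (Pi.single j 1) k‖ ^ 2)
          (fun k _ => sq_nonneg _) (Finset.mem_univ i)

lemma opNorm_sq_le_trace' {d : ℕ} (B : Matrix (Fin d) (Fin d) ℝ) :
    opNorm B ^ 2 ≤ (Bᵀ * B).trace := by
  have htr : (Bᵀ * B).trace = ∑ j, ∑ i, B i j ^ 2 := by
    simp [Matrix.trace, Matrix.mul_apply, Matrix.diag, sq]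
  have htr' : (Bᵀ * B).trace = ∑ i, ∑ j, B i j ^ 2 := by rw [htr, Finset.sum_comm]
  have hnn : 0 ≤ (Bᵀ * B).trace := by
    rw [htr]; positivity
  have hb : opNorm B ≤ Real.sqrt ((Bᵀ * B).trace) := by
    apply ContinuousLinearMap.opNorm_le_bound _ (Real.sqrt_nonneg _)
    intro x
    have hx : ‖Matrix.toEuclideanCLM (𝕜 := ℝ) B x‖
        = Real.sqrt (∑ i, ‖B.mulVec (WithLp.equiv 2 _ x) i‖ ^ 2) := EuclideanSpace.norm_eq _
    have hx2 : ‖x‖ = Real.sqrt (∑ j, ‖(WithLp.equiv 2 (Fin d → ℝ)) x j‖ ^ 2) :=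
      EuclideanSpace.norm_eq _
    rw [hx, hx2, ← Real.sqrt_mul hnn]
    apply Real.sqrt_le_sqrt
    set y := (WithLp.equiv 2 (Fin d → ℝ)) x
    calc ∑ i, ‖B.mulVec y i‖ ^ 2 = ∑ i, (∑ j, B i j * y j) ^ 2 := by
          simp [Matrix.mulVec, dotProduct, Real.norm_eq_abs, sq_abs]
      _ ≤ ∑ i, (∑ j, B i j ^ 2) * (∑ j, y j ^ 2) := by
          apply Finset.sum_le_sum
          intro i _
          exact Finset.sum_mul_sq_le_sq_mul_sq _ _ _
      _ = (Bᵀ * B).trace * ∑ j, ‖y j‖ ^ 2 := by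
          rw [htr', ← Finset.sum_mul]
          simp [Real.norm_eq_abs, sq_abs]
  calc opNorm B ^ 2 ≤ Real.sqrt ((Bᵀ * B).trace) ^ 2 := by
        apply sq_le_sq' _ hb
        have : 0 ≤ opNorm B := norm_nonneg _
        linarith [Real.sqrt_nonneg ((Bᵀ * B).trace)]
    _ = (Bᵀ * B).trace := Real.sq_sqrt hnn

lemma exists_sub_smul_posSemidef' {d : ℕ} (hd : 0 < d) {Q : Matrix (Fin d) (Fin d) ℝ}
    (hQ : Q.PosDef) : ∃ m : ℝ, 0 < m ∧ (Q - m • 1).PosSemidef := by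
  classical
  let f : EuclideanSpace ℝ (Fin d) → ℝ :=
    fun z => ∑ i, (z i) * ∑ j, Q i j * z j
  have hfeq : ∀ x : Fin d → ℝ,
      f ((WithLp.equiv 2 (Fin d → ℝ)).symm x) = x ⬝ᵥ Q.mulVec x := by
    intro x
    simp only [f, WithLp.equiv_symm_apply, WithLp.ofLp_toLp, dotProduct, Matrix.mulVec]
  have hfc : Continuous f := by
    apply continuous_finset_sum
    intro i _
    exact ((continuous_apply i).comp (PiLp.continuous_ofLp (p := 2) (β := fun _ : Fin d => ℝ))).mul
      (continuous_finset_sum _ fun j _ => continuous_const.mul ((continuous_apply j).comp (PiLp.continuous_ofLp (p := 2) (β := fun _ : Fin d => ℝ))))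
  have hsph : IsCompact (Metric.sphere (0 : EuclideanSpace ℝ (Fin d)) 1) :=
    isCompact_sphere _ _
  have hne : (Metric.sphere (0 : EuclideanSpace ℝ (Fin d)) 1).Nonempty := by
    refine ⟨EuclideanSpace.single ⟨0, hd⟩ (1:ℝ), ?_⟩
    simp [mem_sphere_iff_norm]
  obtain ⟨x₀, hx₀S, hmin⟩ := hsph.exists_isMinOn hne hfc.continuousOn
  have hx₀norm : ‖x₀‖ = 1 := by simpa [mem_sphere_iff_norm] using hx₀S
  have hx₀ne : (WithLp.equiv 2 (Fin d → ℝ)) x₀ ≠ 0 := by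
    intro h
    have hz : x₀ = 0 := by
      have := congrArg (WithLp.equiv 2 (Fin d → ℝ)).symm h
      simpa using this
    rw [hz] at hx₀norm; simp at hx₀norm
  set m := f x₀ with hm
  have hmeq : m = (WithLp.equiv 2 (Fin d → ℝ) x₀) ⬝ᵥ Q.mulVec (WithLp.equiv 2 (Fin d → ℝ) x₀) := by
    rw [hm, ← hfeq]
    congr 1
  have hmpos : 0 < m := by
    have h2 := hQ.dotProduct_mulVec_pos hx₀ne
    rw [hmeq]
    simpa using h2
  refine ⟨m, hmpos, ?_⟩
  have hnorm_eq : ∀ x : Fin d → ℝ,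
      ‖(WithLp.equiv 2 (Fin d → ℝ)).symm x‖ = Real.sqrt (x ⬝ᵥ x) := by
    intro x
    rw [EuclideanSpace.norm_eq]
    congr 1
    simp only [WithLp.equiv_symm_apply, WithLp.ofLp_toLp, Real.norm_eq_abs, sq_abs, dotProduct, sq,
      abs_mul_abs_self]
  have key : ∀ x : Fin d → ℝ, m * (x ⬝ᵥ x) ≤ x ⬝ᵥ Q.mulVec x := by
    intro x
    rcases eq_or_ne x 0 with rfl | hx
    · simp
    · have hxx : 0 < x ⬝ᵥ x := by
        have hx2 : x ⬝ᵥ x = ∑ i, x i ^ 2 := by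
          simp only [dotProduct, sq]
        rw [hx2]
        obtain ⟨i, hi⟩ := Function.ne_iff.mp hx
        exact Finset.sum_pos' (fun j _ => sq_nonneg _)
          ⟨i, Finset.mem_univ i, by apply sq_pos_of_ne_zero; exact hi⟩
      set r : ℝ := Real.sqrt (x ⬝ᵥ x) with hr
      have hrpos : 0 < r := Real.sqrt_pos.mpr hxx
      have hr2 : r ^ 2 = x ⬝ᵥ x := Real.sq_sqrt hxx.le
      have hymem : (WithLp.equiv 2 (Fin d → ℝ)).symm (r⁻¹ • x)
          ∈ Metric.sphere (0 : EuclideanSpace ℝ (Fin d)) 1 := by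
        rw [mem_sphere_iff_norm, sub_zero, hnorm_eq]
        have hsc : (r⁻¹ • x) ⬝ᵥ (r⁻¹ • x) = r⁻¹ ^ 2 * (x ⬝ᵥ x) := by
          rw [smul_dotProduct, dotProduct_smul]
          simp [smul_eq_mul]; ring
        rw [hsc, ← hr2]
        rw [show r⁻¹ ^ 2 * r ^ 2 = 1 by field_simp]
        exact Real.sqrt_one
      have hle := hmin hymem
      simp only [Set.mem_setOf_eq] at hle
      rw [hfeq] at hle
      have hfy : (r⁻¹ • x) ⬝ᵥ Q.mulVec (r⁻¹ • x) = r⁻¹ ^ 2 * (x ⬝ᵥ Q.mulVec x) := by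
        rw [Matrix.mulVec_smul, smul_dotProduct, dotProduct_smul]
        simp [smul_eq_mul]; ring
      rw [hfy, ← hm] at hle
      have h1 : r ^ 2 * m ≤ r ^ 2 * (r⁻¹ ^ 2 * (x ⬝ᵥ Q.mulVec x)) :=
        mul_le_mul_of_nonneg_left hle (sq_nonneg r)
      have h2 : r ^ 2 * (r⁻¹ ^ 2 * (x ⬝ᵥ Q.mulVec x)) = x ⬝ᵥ Q.mulVec x := by
        field_simp
      rw [h2] at h1
      calc m * (x ⬝ᵥ x) = r ^ 2 * m := by rw [hr2]; ring
        _ ≤ x ⬝ᵥ Q.mulVec x := h1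
  refine Matrix.PosSemidef.of_dotProduct_mulVec_nonneg ?_ ?_
  · show (Q - m • 1)ᴴ = Q - m • 1
    rw [conjTranspose_sub, hQ.1.eq]
    congr 1
    simp
  · intro x
    have hx := key x
    have hcalc : star x ⬝ᵥ (Q - m • (1 : Matrix (Fin d) (Fin d) ℝ)).mulVec x
        = x ⬝ᵥ Q.mulVec x - m * (x ⬝ᵥ x) := by
      rw [Matrix.sub_mulVec, dotProduct_sub, Matrix.smul_mulVec,
        Matrix.one_mulVec, dotProduct_smul]
      simp [smul_eq_mul]
    rw [hcalc]
    linarith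

lemma trace_upper' {d : ℕ} (Q Qh B : Matrix (Fin d) (Fin d) ℝ) :
    (Qh * Bᵀ * Q * B).trace ≤ ((d : ℝ) * (opNorm Qh * opNorm Q)) * opNorm B ^ 2 := by
  set M := Qh * Bᵀ * Q * B with hM
  have hMop : opNorm M ≤ opNorm Qh * opNorm Q * opNorm B ^ 2 := by
    have h1 : opNorm M ≤ opNorm (Qh * Bᵀ * Q) * opNorm B := opNorm_mul_le' _ _
    have h2 : opNorm (Qh * Bᵀ * Q) ≤ opNorm (Qh * Bᵀ) * opNorm Q := opNorm_mul_le' _ _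
    have h3 : opNorm (Qh * Bᵀ) ≤ opNorm Qh * opNorm Bᵀ := opNorm_mul_le' _ _
    rw [opNorm_transpose'] at h3
    have n1 := opNorm_nonneg' Qh
    have n2 := opNorm_nonneg' Q
    have n3 := opNorm_nonneg' B
    calc opNorm M ≤ opNorm (Qh * Bᵀ * Q) * opNorm B := h1
      _ ≤ (opNorm (Qh * Bᵀ) * opNorm Q) * opNorm B :=
          mul_le_mul_of_nonneg_right h2 n3
      _ ≤ ((opNorm Qh * opNorm B) * opNorm Q) * opNorm B :=
          mul_le_mul_of_nonneg_right (mul_le_mul_of_nonneg_right h3 n2) n3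
      _ = opNorm Qh * opNorm Q * opNorm B ^ 2 := by ring
  have htr : M.trace ≤ (d : ℝ) * opNorm M := by
    rw [Matrix.trace]
    calc ∑ i, M.diag i ≤ ∑ _i : Fin d, opNorm M := by
          apply Finset.sum_le_sum
          intro i _
          exact (le_abs_self _).trans (entry_le_opNorm' M i i)
      _ = (d : ℝ) * opNorm M := by
          simp [Finset.sum_const, Finset.card_univ, nsmul_eq_mul]
  calc M.trace ≤ (d : ℝ) * opNorm M := htr
    _ ≤ (d : ℝ) * (opNorm Qh * opNorm Q * opNorm B ^ 2) := by
        apply mul_le_mul_of_nonneg_left hMop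
        positivity
    _ = ((d : ℝ) * (opNorm Qh * opNorm Q)) * opNorm B ^ 2 := by ring

lemma trace_lower' {d : ℕ} (hd : 0 < d) {Q Qh : Matrix (Fin d) (Fin d) ℝ}
    (hQ : Q.PosDef) (hQh : Qh.PosDef) :
    ∃ c : ℝ, 0 < c ∧ ∀ B : Matrix (Fin d) (Fin d) ℝ,
      c * opNorm B ^ 2 ≤ (Qh * Bᵀ * Q * B).trace := by
  obtain ⟨m, hm, hQm⟩ := exists_sub_smul_posSemidef' hd hQ
  obtain ⟨mh, hmh, hQhm⟩ := exists_sub_smul_posSemidef' hd hQh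
  refine ⟨m * mh, mul_pos hm hmh, fun B => ?_⟩
  have hC : (Bᵀ * Q * B).PosSemidef := by
    have := hQ.posSemidef.conjTranspose_mul_mul_same B
    rwa [← transpose_eq_conjTranspose'] at this
  have hBBt : (B * Bᵀ).PosSemidef := by
    have := Matrix.posSemidef_self_mul_conjTranspose B
    rwa [← transpose_eq_conjTranspose'] at this
  have h1 : mh * (Bᵀ * Q * B).trace ≤ (Qh * (Bᵀ * Q * B)).trace := by
    have h0 := trace_mul_nonneg' hQhm hC
    rw [Matrix.sub_mul, Matrix.trace_sub, Matrix.smul_mul, Matrix.trace_smul,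
      Matrix.one_mul] at h0
    simp only [smul_eq_mul] at h0
    linarith
  have h2 : m * (B * Bᵀ).trace ≤ (Q * (B * Bᵀ)).trace := by
    have h0 := trace_mul_nonneg' hQm hBBt
    rw [Matrix.sub_mul, Matrix.trace_sub, Matrix.smul_mul, Matrix.trace_smul,
      Matrix.one_mul] at h0
    simp only [smul_eq_mul] at h0
    linarith
  have h3 : (Bᵀ * Q * B).trace = (Q * (B * Bᵀ)).trace := by
    rw [Matrix.trace_mul_comm (Bᵀ * Q) B, ← Matrix.mul_assoc, Matrix.trace_mul_comm]
  have h4 : (Bᵀ * B).trace = (B * Bᵀ).trace := Matrix.trace_mul_comm _ _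
  have h5 : opNorm B ^ 2 ≤ (Bᵀ * B).trace := opNorm_sq_le_trace' B
  have hassoc : Qh * Bᵀ * Q * B = Qh * (Bᵀ * Q * B) := by
    simp only [Matrix.mul_assoc]
  rw [hassoc]
  have step1 : m * mh * opNorm B ^ 2 ≤ m * mh * (Bᵀ * B).trace := by
    apply mul_le_mul_of_nonneg_left h5 (mul_pos hm hmh).le
  have step2 : mh * (m * (B * Bᵀ).trace) ≤ mh * (Q * (B * Bᵀ)).trace :=
    mul_le_mul_of_nonneg_left h2 hmh.le
  calc m * mh * opNorm B ^ 2 ≤ m * mh * (Bᵀ * B).trace := step1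
    _ = mh * (m * (B * Bᵀ).trace) := by rw [h4]; ring
    _ ≤ mh * (Q * (B * Bᵀ)).trace := step2
    _ = mh * (Bᵀ * Q * B).trace := by rw [h3]
    _ ≤ (Qh * (Bᵀ * Q * B)).trace := h1

end Helpers

/-- the Kusuoka measure satisfies the Gibbs inequality for `(A, 2)` with pressure
constant `P = P(A, 2)`. -/
theorem stmt_19 {M d : ℕ} (hM : 2 ≤ M) (hd : 2 ≤ d)
    (A : Fin M → Matrix (Fin d) (Fin d) ℝ) (hA : IsIrredTuple A)
    (Q Qh : Matrix (Fin d) (Fin d) ℝ) (hQ : Q.PosDef) (hQh : Qh.PosDef)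
    (hQe : (∑ i, (A i)ᵀ * Q * A i) = Real.exp (pressure A 2).toReal • Q)
    (hQhe : (∑ i, A i * Qh * (A i)ᵀ) = Real.exp (pressure A 2).toReal • Qh)
    (htr : (Q * Qh).trace = 1)
    (μ : Measure (ℕ → Fin M)) [IsProbabilityMeasure μ]
    (hμ : ∀ w : List (Fin M), w ≠ [] →
      μ (cyl w) = ENNReal.ofReal
        (Real.exp (-(w.length : ℝ) * (pressure A 2).toReal) *
          (Qh * (listProd A w)ᵀ * Q * listProd A w).trace)) :
    ∃ C : ℝ, 0 < C ∧ IsGibbs A 2 C (pressure A 2).toReal μ := by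
  have hd0 : 0 < d := lt_of_lt_of_le (by norm_num) hd
  obtain ⟨c₁, hc₁, hlow⟩ := trace_lower' hd0 hQ hQh
  set c₂ : ℝ := (d : ℝ) * (opNorm Qh * opNorm Q) with hc₂
  set C : ℝ := max c₂ c₁⁻¹ with hCdef
  have hCpos : 0 < C := lt_max_of_lt_right (inv_pos.mpr hc₁)
  refine ⟨C, hCpos, ?_⟩
  intro w hw
  have hT1 := hlow (listProd A w)
  have hT2 := trace_upper' Q Qh (listProd A w)
  have hT0 : 0 ≤ (Qh * (listProd A w)ᵀ * Q * listProd A w).trace :=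
    le_trans (by positivity) hT1
  have hEpos : 0 < Real.exp (-(w.length : ℝ) * (pressure A 2).toReal) := Real.exp_pos _
  have hμw : (μ (cyl w)).toReal
      = Real.exp (-(w.length : ℝ) * (pressure A 2).toReal) *
        (Qh * (listProd A w)ᵀ * Q * listProd A w).trace := by
    rw [hμ w hw, ENNReal.toReal_ofReal (by positivity)]
  have hpow : opNorm (listProd A w) ^ (2 : ℝ) = opNorm (listProd A w) ^ (2 : ℕ) := by
    rw [show (2:ℝ) = ((2:ℕ):ℝ) by norm_num, Real.rpow_natCast]
  set E := Real.exp (-(w.length : ℝ) * (pressure A 2).toReal)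
  set T := (Qh * (listProd A w)ᵀ * Q * listProd A w).trace
  set N := opNorm (listProd A w)
  constructor
  · rw [hμw, hpow]
    have hTC : T ≤ C * N ^ 2 :=
      hT2.trans (mul_le_mul_of_nonneg_right (le_max_left _ _) (sq_nonneg _))
    calc C⁻¹ * (E * T) ≤ C⁻¹ * (E * (C * N ^ 2)) := by
          apply mul_le_mul_of_nonneg_left _ (inv_nonneg.mpr hCpos.le)
          exact mul_le_mul_of_nonneg_left hTC hEpos.le
      _ = E * N ^ 2 := by
          field_simp
  · rw [hμw, hpow]
    have hN : N ^ 2 ≤ C * T := by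
      have hmul := mul_le_mul_of_nonneg_left hT1 (inv_nonneg.mpr hc₁.le)
      have heq : c₁⁻¹ * (c₁ * N ^ 2) = N ^ 2 := by field_simp
      calc N ^ 2 = c₁⁻¹ * (c₁ * N ^ 2) := heq.symm
        _ ≤ c₁⁻¹ * T := hmul
        _ ≤ C * T := mul_le_mul_of_nonneg_right (le_max_right _ _) hT0
    calc E * N ^ 2 ≤ E * (C * T) := mul_le_mul_of_nonneg_left hN hEpos.le
      _ = C * (E * T) := by ring
end
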